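/- Let Φ(a) = γ([a, ∞)) where γ is the standard one-dimensional Gaussian measure on ℝ, and let Φ_dis(a) = 2·Φ(a)·Φ(−a). Let D be a probability measure on ℝ^d with x ≠ 0 D-almost surely, and let w ∈ ℝ^d. Then the expected disagreement of the Gaussian posterior Q_w = N(w, I_d) over linear classifiers satisfies: E_{x∼D} P_{(w',w'')∼N(w,I_d)⊗N(w,I_d)}( sgn(w'·x) ≠ sgn(w''·x) ) = E_{x∼D} Φ_dis( (w·x)/‖x‖ ). -/

import Mathlib

/-!
STATEMENT 18: Expected disagreement of the Gaussian posterior over linear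
classifiers equals the expected `Φ_dis`-loss:
`E_{x∼D} P_{(w',w'')∼N(w,I_d)⊗N(w,I_d)}(sgn(w'·x) ≠ sgn(w''·x))
  = E_{x∼D} Φ_dis((w·x)/‖x‖)` with `Φ_dis(a) = 2 Φ(a) Φ(-a)`.
`ℝ^d` is `Fin d → ℝ`; `Φ(a) = γ([a,∞))` is the standard Gaussian tail function.
-/

open MeasureTheory ProbabilityTheory Real
open scoped ENNReal Classical
open scoped NNReal

noncomputable section

/-- Dot product on `ℝ^d`. -/
def dot {d : ℕ} (w x : Fin d → ℝ) : ℝ := ∑ i, w i * x i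

/-- Euclidean norm on `ℝ^d`. -/
def enorm' {d : ℕ} (x : Fin d → ℝ) : ℝ := Real.sqrt (∑ i, x i ^ 2)

/-- Sign, as a Boolean label (`true ↔ +1`). -/
def linSgn (t : ℝ) : Bool := decide (0 < t)

/-- The Gaussian measure `N(w, I_d)` on `ℝ^d`. -/
def gaussPi {d : ℕ} (w : Fin d → ℝ) : Measure (Fin d → ℝ) :=
  Measure.pi fun i => gaussianReal (w i) 1

/-- The standard Gaussian tail function `Φ(a) = γ([a,∞))`. -/
def gaussTail (a : ℝ) : ℝ := (gaussianReal 0 1 (Set.Ici a)).toReal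

lemma integral_exp_neg_sq_div (v : ℝ) (hv : 0 < v) (m : ℝ) :
    ∫ a : ℝ, rexp (-(a - m)^2 / (2 * v)) = Real.sqrt (2 * π * v) := by
  rw [integral_sub_right_eq_self (fun a => rexp (-a^2 / (2*v))) m]
  have : ∀ a : ℝ, rexp (-a^2/(2*v)) = rexp (-((2*v)⁻¹) * a^2) := by
    intro a; congr 1; field_simp
  simp_rw [this]
  rw [integral_gaussian]
  congr 1
  field_simp

lemma pdf_conv (m₁ m₂ : ℝ) {v₁ v₂ : ℝ≥0} (h₁ : v₁ ≠ 0) (h₂ : v₂ ≠ 0) (c : ℝ) :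
    ∫ a : ℝ, gaussianPDFReal m₁ v₁ a * gaussianPDFReal m₂ v₂ (c - a)
      = gaussianPDFReal (m₁ + m₂) (v₁ + v₂) c := by
  have t₁ : (0:ℝ) < v₁ := lt_of_le_of_ne v₁.coe_nonneg (by exact_mod_cast (Ne.symm h₁))
  have t₂ : (0:ℝ) < v₂ := lt_of_le_of_ne v₂.coe_nonneg (by exact_mod_cast (Ne.symm h₂))
  set s : ℝ := (v₁:ℝ) + v₂ with hs
  have hspos : 0 < s := by positivity
  set vstar : ℝ := (v₁:ℝ) * v₂ / s with hvstar
  have hvpos : 0 < vstar := by positivity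
  set mstar : ℝ := m₁ + (v₁:ℝ) * (c - m₁ - m₂) / s with hmstar
  have key : ∀ a : ℝ, gaussianPDFReal m₁ v₁ a * gaussianPDFReal m₂ v₂ (c - a)
      = ((√(2 * π * v₁))⁻¹ * (√(2 * π * v₂))⁻¹ * rexp (-(c - (m₁ + m₂))^2 / (2 * s)))
        * rexp (-(a - mstar)^2 / (2 * vstar)) := by
    intro a
    simp only [gaussianPDFReal]
    have hexp : -(a - m₁)^2 / (2 * (v₁:ℝ)) + -(c - a - m₂)^2 / (2 * (v₂:ℝ))
        = -(c - (m₁ + m₂))^2 / (2 * s) + -(a - mstar)^2 / (2 * vstar) := by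
      rw [hmstar, hvstar, hs]
      field_simp
      ring
    rw [mul_mul_mul_comm, ← Real.exp_add, hexp, Real.exp_add]
    ring
  simp_rw [key]
  rw [MeasureTheory.integral_const_mul, integral_exp_neg_sq_div vstar hvpos mstar]
  simp only [gaussianPDFReal]
  have hcoe : ((v₁ + v₂ : ℝ≥0) : ℝ) = s := by push_cast [hs]; ring
  rw [hcoe]
  have hc : (√(2 * π * v₁))⁻¹ * (√(2 * π * v₂))⁻¹ * √(2 * π * vstar) = (√(2 * π * s))⁻¹ := by
    rw [← Real.sqrt_inv, ← Real.sqrt_inv, ← Real.sqrt_mul (by positivity),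
      ← Real.sqrt_mul (by positivity), ← Real.sqrt_inv]
    congr 1
    rw [hvstar]
    field_simp
  calc (√(2 * π * ↑v₁))⁻¹ * (√(2 * π * ↑v₂))⁻¹ * rexp (-(c - (m₁ + m₂)) ^ 2 / (2 * s)) * √(2 * π * vstar)
      = ((√(2 * π * ↑v₁))⁻¹ * (√(2 * π * ↑v₂))⁻¹ * √(2 * π * vstar)) * rexp (-(c - (m₁ + m₂)) ^ 2 / (2 * s)) := by ring
    _ = (√(2 * π * s))⁻¹ * rexp (-(c - (m₁ + m₂)) ^ 2 / (2 * s)) := by rw [hc]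


lemma gaussianReal_conv (m₁ m₂ : ℝ) (v₁ v₂ : ℝ≥0) :
    ((gaussianReal m₁ v₁).prod (gaussianReal m₂ v₂)).map (fun p : ℝ × ℝ => p.1 + p.2)
      = gaussianReal (m₁ + m₂) (v₁ + v₂) := by
  by_cases h₁ : v₁ = 0
  · subst h₁
    rw [gaussianReal_zero_var, zero_add]
    rw [Measure.dirac_prod, Measure.map_map measurable_add measurable_prodMk_left]
    have : ((fun p : ℝ × ℝ => p.1 + p.2) ∘ (Prod.mk m₁)) = (fun y => m₁ + y) := rfl
    rw [this, gaussianReal_map_const_add, add_comm m₂ m₁]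
  by_cases h₂ : v₂ = 0
  · subst h₂
    rw [gaussianReal_zero_var, add_zero]
    rw [Measure.prod_dirac, Measure.map_map measurable_add measurable_prodMk_right]
    have : ((fun p : ℝ × ℝ => p.1 + p.2) ∘ (fun x => (x, m₂))) = (fun y => y + m₂) := rfl
    rw [this, gaussianReal_map_add_const]
  -- main case
  have h₁₂ : v₁ + v₂ ≠ 0 := fun h => h₁ (by simpa using (add_eq_zero.1 h).1)
  ext s hs
  rw [Measure.map_apply measurable_add hs,
    Measure.prod_apply (measurable_add hs)]
  have step1 : ∀ a : ℝ, gaussianReal m₂ v₂ (Prod.mk a ⁻¹' ((fun p : ℝ × ℝ => p.1 + p.2) ⁻¹' s))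
      = ∫⁻ c, s.indicator (fun _ => (1:ℝ≥0∞)) c * gaussianPDF m₂ v₂ (c - a) := by
    intro a
    have hpre : (Prod.mk a ⁻¹' ((fun p : ℝ × ℝ => p.1 + p.2) ⁻¹' s)) = (fun y => a + y) ⁻¹' s := rfl
    have hpdf : ∀ c : ℝ, gaussianPDF (m₂ + a) v₂ c = gaussianPDF m₂ v₂ (c - a) := by
      intro c; rw [gaussianPDF, gaussianPDF, gaussianPDFReal_sub]
    rw [hpre, ← Measure.map_apply (measurable_const_add a) hs, gaussianReal_map_const_add,
      gaussianReal_of_var_ne_zero _ h₂, withDensity_apply _ hs,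
      ← lintegral_indicator hs]
    congr 1
    ext c
    by_cases hc : c ∈ s <;>
      simp [hc, Set.indicator_of_mem, Set.indicator_of_notMem, hpdf]
  simp_rw [step1]
  have hmeas2 : Measurable (fun p : ℝ × ℝ =>
      Set.indicator s (fun _ => (1:ℝ≥0∞)) p.2 * gaussianPDF m₂ v₂ (p.2 - p.1)) := by
    apply Measurable.mul
    · exact ((measurable_indicator_const_iff 1).2 hs).comp measurable_snd
    · exact (measurable_gaussianPDF m₂ v₂).comp (measurable_snd.sub measurable_fst)
  rw [gaussianReal_of_var_ne_zero _ h₁,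
    lintegral_withDensity_eq_lintegral_mul _ (measurable_gaussianPDF _ _)
      (Measurable.lintegral_prod_right' hmeas2)]
  have swap := lintegral_lintegral_swap
    (μ := (volume : Measure ℝ)) (ν := (volume : Measure ℝ))
    (f := fun a c => gaussianPDF m₁ v₁ a *
      (Set.indicator s (fun _ => (1:ℝ≥0∞)) c * gaussianPDF m₂ v₂ (c - a)))
    (((measurable_gaussianPDF m₁ v₁).comp measurable_fst).mul hmeas2).aemeasurable
  simp only [Pi.mul_apply] at swap ⊢
  calc ∫⁻ a, gaussianPDF m₁ v₁ a *
        ∫⁻ c, Set.indicator s (fun _ => (1:ℝ≥0∞)) c * gaussianPDF m₂ v₂ (c - a)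
      = ∫⁻ a, ∫⁻ c, gaussianPDF m₁ v₁ a *
          (Set.indicator s (fun _ => (1:ℝ≥0∞)) c * gaussianPDF m₂ v₂ (c - a)) := by
        congr 1; ext a
        rw [← lintegral_const_mul' _ _ (show gaussianPDF m₁ v₁ a ≠ ∞ by simp [gaussianPDF])]
    _ = ∫⁻ c, ∫⁻ a, gaussianPDF m₁ v₁ a *
          (Set.indicator s (fun _ => (1:ℝ≥0∞)) c * gaussianPDF m₂ v₂ (c - a)) := swap
    _ = ∫⁻ c, Set.indicator s (fun _ => (1:ℝ≥0∞)) c *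
          ∫⁻ a, gaussianPDF m₁ v₁ a * gaussianPDF m₂ v₂ (c - a) := by
        congr 1; ext c
        have hne : Set.indicator s (fun _ => (1:ℝ≥0∞)) c ≠ ∞ := by
          by_cases hc : c ∈ s <;> simp [hc]
        rw [← lintegral_const_mul' _ _ hne]
        congr 1; ext a; ring
    _ = ∫⁻ c, Set.indicator s (fun _ => (1:ℝ≥0∞)) c * gaussianPDF (m₁ + m₂) (v₁ + v₂) c := by
        congr 1; ext c
        congr 1
        have hint : Integrable (fun a => gaussianPDFReal m₁ v₁ a * gaussianPDFReal m₂ v₂ (c - a)) := by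
          have hb : ∃ C, ∀ a : ℝ, ‖gaussianPDFReal m₂ v₂ (c - a)‖ ≤ C := by
            refine ⟨(√(2 * π * v₂))⁻¹, fun a => ?_⟩
            rw [Real.norm_eq_abs, abs_of_nonneg (gaussianPDFReal_nonneg _ _ _), gaussianPDFReal]
            refine mul_le_of_le_one_right (by positivity) (Real.exp_le_one_iff.2 ?_)
            apply div_nonpos_of_nonpos_of_nonneg
            · simp [sq_nonneg]
            · positivity
          obtain ⟨C, hC⟩ := hb
          have := (integrable_gaussianPDFReal m₁ v₁).bdd_mul
            (((measurable_gaussianPDFReal m₂ v₂).comp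
              ((measurable_const.sub measurable_id))).aestronglyMeasurable) (ae_of_all _ hC)
          simpa [mul_comm] using this
        simp_rw [gaussianPDF]
        calc ∫⁻ a, ENNReal.ofReal (gaussianPDFReal m₁ v₁ a) * ENNReal.ofReal (gaussianPDFReal m₂ v₂ (c - a))
            = ∫⁻ a, ENNReal.ofReal (gaussianPDFReal m₁ v₁ a * gaussianPDFReal m₂ v₂ (c - a)) := by
              congr 1; ext a
              rw [ENNReal.ofReal_mul (gaussianPDFReal_nonneg _ _ _)]
          _ = ENNReal.ofReal (∫ a, gaussianPDFReal m₁ v₁ a * gaussianPDFReal m₂ v₂ (c - a)) := by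
              rw [← ofReal_integral_eq_lintegral_ofReal hint (ae_of_all _ (fun a =>
                mul_nonneg (gaussianPDFReal_nonneg _ _ _) (gaussianPDFReal_nonneg _ _ _)))]
          _ = ENNReal.ofReal (gaussianPDFReal (m₁ + m₂) (v₁ + v₂) c) := by
              rw [pdf_conv m₁ m₂ h₁ h₂ c]
    _ = gaussianReal (m₁ + m₂) (v₁ + v₂) s := by
        rw [gaussianReal_of_var_ne_zero _ h₁₂, withDensity_apply _ hs, ← lintegral_indicator hs]
        congr 1; ext c
        by_cases hc : c ∈ s <;>
          simp [hc, Set.indicator_of_mem, Set.indicator_of_notMem]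

lemma map_linsum_gaussPi : ∀ (n : ℕ) (c m : Fin n → ℝ),
    (Measure.pi fun i => gaussianReal (m i) 1).map (fun y => ∑ i, c i * y i)
      = gaussianReal (∑ i, c i * m i) (∑ i, (⟨c i ^ 2, sq_nonneg _⟩ : ℝ≥0)) := by
  intro n
  induction n with
  | zero =>
    intro c m
    have : (fun y : Fin 0 → ℝ => ∑ i, c i * y i) = (fun _ => (0:ℝ)) := by
      ext y; simp
    rw [this, Measure.map_const]
    simp
    exact (gaussianReal_zero_var 0).symm
  | succ n ih =>
    intro c m
    set e := MeasurableEquiv.piFinSuccAbove (fun _ : Fin (n+1) => ℝ) 0 with he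
    have hmp := measurePreserving_piFinSuccAbove (fun i : Fin (n+1) => gaussianReal (m i) 1) 0
    have hfe : (fun y : Fin (n+1) → ℝ => ∑ i, c i * y i)
        = (fun p : ℝ × (Fin n → ℝ) => c 0 * p.1 + ∑ j : Fin n, c j.succ * p.2 j) ∘ e := by
      ext y
      simp only [Function.comp_apply, he, MeasurableEquiv.piFinSuccAbove_apply]
      rw [Fin.sum_univ_succ]
      simp [Fin.succAbove_zero, Fin.tail]
    have hmg : Measurable (fun p : ℝ × (Fin n → ℝ) => c 0 * p.1 + ∑ j : Fin n, c j.succ * p.2 j) := by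
      apply Measurable.add
      · exact measurable_fst.const_mul _
      · exact Finset.measurable_sum _ (fun j _ => (measurable_snd.eval).const_mul _)
    rw [hfe, ← Measure.map_map hmg e.measurable, hmp.map_eq]
    have hm1 : Measurable (fun a : ℝ => c 0 * a) := measurable_const_mul _
    have hm2 : Measurable (fun z : Fin n → ℝ => ∑ j : Fin n, c j.succ * z j) :=
      Finset.measurable_sum _ (fun j _ => (measurable_pi_apply j).const_mul _)
    have hsplit : (fun p : ℝ × (Fin n → ℝ) => c 0 * p.1 + ∑ j : Fin n, c j.succ * p.2 j)
        = (fun q : ℝ × ℝ => q.1 + q.2) ∘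
          Prod.map (fun a : ℝ => c 0 * a) (fun z : Fin n → ℝ => ∑ j : Fin n, c j.succ * z j) := rfl
    rw [hsplit, ← Measure.map_map measurable_add (hm1.prodMap hm2),
      ← Measure.map_prod_map _ _ hm1 hm2]
    have hpi : (Measure.pi fun j : Fin n => gaussianReal (m ((0 : Fin (n+1)).succAbove j)) 1)
        = Measure.pi fun j : Fin n => gaussianReal ((m ∘ Fin.succ) j) 1 := by
      congr 1
    rw [hpi, ih (fun j => c j.succ) (m ∘ Fin.succ), gaussianReal_map_const_mul,
      gaussianReal_conv, Fin.sum_univ_succ (f := fun i => c i * m i)]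
    congr 1
    rw [mul_one]
    exact (Fin.sum_univ_succ (f := fun i => (⟨c i ^ 2, sq_nonneg _⟩ : ℝ≥0))).symm

lemma gaussianReal_std_noAtoms : ∀ a : ℝ, gaussianReal 0 1 {a} = 0 := fun a =>
  gaussianReal_absolutelyContinuous 0 one_ne_zero (measure_singleton a)

instance : NullSingletonClass (gaussianReal 0 1) := ⟨gaussianReal_std_noAtoms⟩

lemma gaussianReal_rep (m : ℝ) (V : ℝ≥0) :
    gaussianReal m V = (gaussianReal 0 1).map (fun z => Real.sqrt V * z + m) := by
  have h1 : (gaussianReal 0 1).map (fun z : ℝ => Real.sqrt V * z) = gaussianReal 0 V := by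
    rw [gaussianReal_map_const_mul]
    congr 1
    · ring
    · ext
      push_cast
      rw [Real.sq_sqrt V.coe_nonneg]
      simp
  have h2 : (fun z : ℝ => Real.sqrt V * z + m) = (· + m) ∘ (fun z : ℝ => Real.sqrt V * z) := rfl
  rw [h2, ← Measure.map_map (measurable_add_const m) (measurable_const_mul _), h1,
    gaussianReal_map_add_const, zero_add]

lemma gauss_prob_Ioi (m : ℝ) {V : ℝ≥0} (hV : V ≠ 0) :
    gaussianReal m V (Set.Ioi 0) = gaussianReal 0 1 (Set.Ici (-(m / Real.sqrt V))) := by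
  have hVpos : (0:ℝ) < V := lt_of_le_of_ne V.coe_nonneg (by exact_mod_cast (Ne.symm hV))
  have hs : (0:ℝ) < Real.sqrt V := Real.sqrt_pos.2 hVpos
  rw [gaussianReal_rep m V, Measure.map_apply ((measurable_const_mul _).add_const m)
    measurableSet_Ioi]
  have hpre : (fun z : ℝ => Real.sqrt V * z + m) ⁻¹' (Set.Ioi 0) = Set.Ioi (-(m / Real.sqrt V)) := by
    ext z
    simp only [Set.mem_preimage, Set.mem_Ioi]
    have hkey : Real.sqrt V * (m / Real.sqrt V) = m := by field_simp
    constructor <;> intro h <;> nlinarith [mul_pos hs hs]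
  rw [hpre]
  exact (MeasureTheory.Ioi_ae_eq_Ici (a := -(m / Real.sqrt V)) |> measure_congr)

lemma gauss_prob_Iic (m : ℝ) {V : ℝ≥0} (hV : V ≠ 0) :
    gaussianReal m V (Set.Iic 0) = gaussianReal 0 1 (Set.Ici (m / Real.sqrt V)) := by
  have hVpos : (0:ℝ) < V := lt_of_le_of_ne V.coe_nonneg (by exact_mod_cast (Ne.symm hV))
  have hs : (0:ℝ) < Real.sqrt V := Real.sqrt_pos.2 hVpos
  rw [gaussianReal_rep m V, Measure.map_apply ((measurable_const_mul _).add_const m)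
    measurableSet_Iic]
  have hpre : (fun z : ℝ => Real.sqrt V * z + m) ⁻¹' (Set.Iic 0)
      = Set.Iic (-(m / Real.sqrt V)) := by
    ext z
    simp only [Set.mem_preimage, Set.mem_Iic]
    have hkey : Real.sqrt V * (m / Real.sqrt V) = m := by field_simp
    constructor <;> intro h <;> nlinarith [mul_pos hs hs]
  rw [hpre]
  have hneg : (gaussianReal 0 1).map (fun z : ℝ => -z) = gaussianReal 0 1 := by
    have : (fun z : ℝ => -z) = (fun z : ℝ => (-1 : ℝ) * z) := by ext z; ring
    rw [this, gaussianReal_map_const_mul]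
    congr 1
    · ring
    · ext; push_cast; norm_num
  calc gaussianReal 0 1 (Set.Iic (-(m / Real.sqrt V)))
      = ((gaussianReal 0 1).map (fun z : ℝ => -z)) (Set.Iic (-(m / Real.sqrt V))) := by
        rw [hneg]
    _ = gaussianReal 0 1 ((fun z : ℝ => -z) ⁻¹' Set.Iic (-(m / Real.sqrt V))) := by
        rw [Measure.map_apply measurable_neg measurableSet_Iic]
    _ = gaussianReal 0 1 (Set.Ici (m / Real.sqrt V)) := by
        congr 1
        ext z
        simp

lemma gaussPi_prob {d : ℕ} (w : Fin d → ℝ) : IsProbabilityMeasure (gaussPi w) := by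
  rw [gaussPi]; infer_instance

lemma map_dot {d : ℕ} (w x : Fin d → ℝ) :
    (gaussPi w).map (fun y => dot y x)
      = gaussianReal (dot w x) (∑ i, (⟨x i ^ 2, sq_nonneg _⟩ : ℝ≥0)) := by
  have h : (fun y : Fin d → ℝ => dot y x) = fun y => ∑ i, x i * y i := by
    ext y; simp [dot, mul_comm]
  rw [gaussPi, h, map_linsum_gaussPi]
  congr 1
  simp [dot, mul_comm]

lemma pointwise_disagree {d : ℕ} (w x : Fin d → ℝ) (hx : x ≠ 0) :
    (((gaussPi w).prod (gaussPi w))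
        {p | linSgn (dot p.1 x) ≠ linSgn (dot p.2 x)}).toReal
      = 2 * gaussTail (dot w x / enorm' x) * gaussTail (-(dot w x / enorm' x)) := by
  haveI := gaussPi_prob w
  set V : ℝ≥0 := ∑ i, (⟨x i ^ 2, sq_nonneg _⟩ : ℝ≥0) with hVdef
  have hV : V ≠ 0 := by
    intro h
    apply hx
    ext i
    have := (Finset.sum_eq_zero_iff.1 h) i (Finset.mem_univ i)
    have h2 : x i ^ 2 = 0 := by
      have := congrArg NNReal.toReal this
      exact this
    simpa [pow_eq_zero_iff] using h2
  have hVcoe : (V : ℝ) = ∑ i, x i ^ 2 := by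
    rw [hVdef]; exact NNReal.coe_sum _ _
  have hnorm : enorm' x = Real.sqrt V := by rw [enorm', hVcoe]
  have hmdot : Measurable fun y : Fin d → ℝ => dot y x :=
    Finset.measurable_sum _ (fun i _ => (measurable_pi_apply i).mul_const _)
  set A : Set (Fin d → ℝ) := {y | 0 < dot y x} with hAdef
  have hA : MeasurableSet A := measurableSet_lt measurable_const hmdot
  have hμA : gaussPi w A = gaussianReal 0 1 (Set.Ici (-(dot w x / enorm' x))) := by
    have : A = (fun y : Fin d → ℝ => dot y x) ⁻¹' (Set.Ioi 0) := rfl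
    rw [this, ← Measure.map_apply hmdot measurableSet_Ioi, map_dot, ← hVdef,
      gauss_prob_Ioi _ hV, hnorm]
  have hμAc : gaussPi w Aᶜ = gaussianReal 0 1 (Set.Ici (dot w x / enorm' x)) := by
    have : Aᶜ = (fun y : Fin d → ℝ => dot y x) ⁻¹' (Set.Iic 0) := by
      ext y; simp [hAdef, not_lt]
    rw [this, ← Measure.map_apply hmdot measurableSet_Iic, map_dot, ← hVdef,
      gauss_prob_Iic _ hV, hnorm]
  have hset : {p : (Fin d → ℝ) × (Fin d → ℝ) | linSgn (dot p.1 x) ≠ linSgn (dot p.2 x)}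
      = (A ×ˢ Aᶜ) ∪ (Aᶜ ×ˢ A) := by
    ext p
    simp only [Set.mem_setOf_eq, Set.mem_union, Set.mem_prod, Set.mem_compl_iff, hAdef, linSgn]
    by_cases h1 : 0 < dot p.1 x <;> by_cases h2 : 0 < dot p.2 x <;> simp [h1, h2]
  have hdisj : Disjoint (A ×ˢ Aᶜ) (Aᶜ ×ˢ A) := by
    rw [Set.disjoint_left]
    rintro p ⟨hp1, -⟩ ⟨hp1', -⟩
    exact hp1' hp1
  rw [hset, measure_union hdisj (hA.compl.prod hA), Measure.prod_prod, Measure.prod_prod,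
    hμA, hμAc]
  have h1 : gaussianReal 0 1 (Set.Ici (-(dot w x / enorm' x))) ≠ ∞ := measure_ne_top _ _
  have h2 : gaussianReal 0 1 (Set.Ici (dot w x / enorm' x)) ≠ ∞ := measure_ne_top _ _
  rw [ENNReal.toReal_add (ENNReal.mul_ne_top h1 h2) (ENNReal.mul_ne_top h2 h1),
    ENNReal.toReal_mul, ENNReal.toReal_mul, gaussTail, gaussTail]
  ring

theorem disagreement_eq_phi_dis
    {d : ℕ}
    (D : Measure (Fin d → ℝ)) [IsProbabilityMeasure D]
    (h0 : ∀ᵐ x ∂D, x ≠ 0)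
    (w : Fin d → ℝ) :
    ∫ x, (((gaussPi w).prod (gaussPi w))
        {p | linSgn (dot p.1 x) ≠ linSgn (dot p.2 x)}).toReal ∂D
      = ∫ x, 2 * gaussTail (dot w x / enorm' x) * gaussTail (-(dot w x / enorm' x)) ∂D := by
  refine integral_congr_ae ?_
  filter_upwards [h0] with x hx
  exact pointwise_disagree w x hx
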